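/- Let G be a group with finite generating set S, and let π : G → G̃ be a surjective homomorphism whose injectivity radius with respect to S is at least 2E, for some E ≥ 0. If F̃ ≤ G̃ is a subgroup contained in the ball of radius E around the identity of G̃ (in the word metric for π(S)), then F̃ is the isomorphic image under π of a subgroup F ≤ G of order at most |S|^{2E+1}; in particular F̃ is finite. -/

import Mathlib

/-- `inBall S r g` means `g` lies in the ball of radius `r` around the identity in
the word metric on the group generated by `S` (letters from `S ∪ S⁻¹`). -/
def inBall {G : Type*} [Group G] (S : Set G) (r : ℕ) (g : G) : Prop :=
  ∃ l : List G, (∀ x ∈ l, x ∈ S ∨ x⁻¹ ∈ S) ∧ l.length ≤ r ∧ l.prod = g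

section aux

open Pointwise

variable {G Q : Type*} [Group G] [Group Q]

lemma inBall_one (S : Set G) (r : ℕ) : inBall S r 1 := ⟨[], by simp, by simp, by simp⟩

lemma inBall_mono {S : Set G} {r r' : ℕ} {g : G} (h : r ≤ r') (hg : inBall S r g) :
    inBall S r' g := by
  obtain ⟨l, h1, h2, h3⟩ := hg
  exact ⟨l, h1, h2.trans h, h3⟩

lemma inBall_mul {S : Set G} {r r' : ℕ} {g h : G} (hg : inBall S r g) (hh : inBall S r' h) :
    inBall S (r + r') (g * h) := by
  obtain ⟨l, h1, h2, h3⟩ := hg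
  obtain ⟨m, h1', h2', h3'⟩ := hh
  refine ⟨l ++ m, ?_, ?_, ?_⟩
  · intro x hx
    rcases List.mem_append.1 hx with hx | hx
    · exact h1 x hx
    · exact h1' x hx
  · simpa using Nat.add_le_add h2 h2'
  · simp [h3, h3']

lemma inBall_inv {S : Set G} {r : ℕ} {g : G} (hg : inBall S r g) : inBall S r g⁻¹ := by
  obtain ⟨l, h1, h2, h3⟩ := hg
  refine ⟨(l.map fun x => x⁻¹).reverse, ?_, ?_, ?_⟩
  · intro x hx
    simp only [List.mem_reverse, List.mem_map] at hx
    obtain ⟨y, hy, rfl⟩ := hx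
    rcases h1 y hy with h | h
    · right; simpa using h
    · left; exact h
  · simpa using h2
  · rw [← List.prod_inv_reverse, h3]

lemma lift_list (π : G →* Q) (S : Set G) :
    ∀ l : List Q, (∀ x ∈ l, x ∈ π '' S ∨ x⁻¹ ∈ π '' S) →
      ∃ m : List G, (∀ x ∈ m, x ∈ S ∨ x⁻¹ ∈ S) ∧ m.length = l.length ∧ m.map π = l := by
  intro l
  induction l with
  | nil => exact fun _ => ⟨[], by simp, by simp, by simp⟩
  | cons a t ih =>
    intro hl
    obtain ⟨m, hm1, hm2, hm3⟩ := ih (fun x hx => hl x (List.mem_cons_of_mem _ hx))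
    rcases hl a (List.mem_cons_self) with ⟨s, hs, hsa⟩ | ⟨s, hs, hsa⟩
    · refine ⟨s :: m, ?_, by simp [hm2], by simp [hm3, hsa]⟩
      intro x hx
      rcases List.mem_cons.1 hx with rfl | hx
      · exact Or.inl hs
      · exact hm1 x hx
    · have hsa' : π s⁻¹ = a := by rw [map_inv, hsa, inv_inv]
      refine ⟨s⁻¹ :: m, ?_, by simp [hm2], by simp [hm3, hsa']⟩
      intro x hx
      rcases List.mem_cons.1 hx with rfl | hx
      · exact Or.inr (by simpa using hs)
      · exact hm1 x hx

lemma inBall_lift (π : G →* Q) (S : Set G) (r : ℕ) (q : Q)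
    (hq : inBall (π '' S) r q) : ∃ g : G, inBall S r g ∧ π g = q := by
  obtain ⟨l, h1, h2, h3⟩ := hq
  obtain ⟨m, hm1, hm2, hm3⟩ := lift_list π S l h1
  exact ⟨m.prod, ⟨m, hm1, by omega, rfl⟩, by rw [map_list_prod, hm3, h3]⟩

/-- Words of length ≤ n with letters in `S ∪ S⁻¹` give elements of `T ^ n`
where `T = S ∪ S⁻¹ ∪ {1}`. -/
lemma inBall_mem_pow [DecidableEq G] (S : Finset G) (n : ℕ) (g : G)
    (hg : inBall (S : Set G) n g) :
    g ∈ (S ∪ S.image (fun x => x⁻¹) ∪ {1}) ^ n := by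
  set T : Finset G := S ∪ S.image (fun x => x⁻¹) ∪ {1} with hT
  have h1T : (1 : G) ∈ T := by simp [hT]
  obtain ⟨l, hl, hlen, hprod⟩ := hg
  induction n generalizing l g with
  | zero =>
    have : l = [] := List.length_eq_zero_iff.1 (Nat.le_zero.1 hlen)
    subst this
    simp at hprod
    simpa [← hprod] using Finset.one_mem_pow h1T (n := 0)
  | succ n ih =>
    match l with
    | [] =>
      simp at hprod
      simpa [← hprod] using Finset.one_mem_pow h1T
    | a :: t =>
      have ha : a ∈ T := by
        rcases hl a (List.mem_cons_self) with h | h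
        · exact Finset.mem_union_left _ (Finset.mem_union_left _ h)
        · have : a ∈ S.image (fun x => x⁻¹) :=
            Finset.mem_image.2 ⟨a⁻¹, h, by simp⟩
          exact Finset.mem_union_left _ (Finset.mem_union_right _ this)
      have ht : t.prod ∈ T ^ n := by
        refine ih t.prod t (fun x hx => hl x (List.mem_cons_of_mem _ hx)) ?_ rfl
        simpa using hlen
      rw [pow_succ']
      rw [← hprod]
      simpa using Finset.mul_mem_mul ha ht

end aux

open Pointwise in
/-- If `π : G ↠ G̃` has injectivity radius at least `2E` with respect to a finite
generating set `S`, then any subgroup `F̃ ≤ G̃` contained in the ball of radius `E`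
around the identity of `G̃` is the isomorphic image under `π` of a subgroup `F ≤ G`
of uniformly bounded order; in particular `F̃` is finite. -/
theorem subgroup_in_ball_lifts {G Q : Type*} [Group G] [Group Q]
    (S : Finset G) (hgen : Subgroup.closure (S : Set G) = ⊤)
    (π : G →* Q) (hsurj : Function.Surjective π) (E : ℕ)
    (hinj : ∀ g h : G, inBall (S : Set G) (2 * E) g → inBall (S : Set G) (2 * E) h →
      π g = π h → g = h)
    (Ftilde : Subgroup Q) (hFt : ∀ q ∈ Ftilde, inBall (π '' (S : Set G)) E q) :
    ∃ F : Subgroup G, Set.BijOn π (F : Set G) (Ftilde : Set Q) ∧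
      Nat.card F ≤ (2 * S.card + 1) ^ (2 * E + 1) ∧ Finite Ftilde := by
  classical
  have hE2 : E ≤ 2 * E := by omega
  -- contraction: a ball-2E element mapping into Ftilde is in fact in ball E
  have key : ∀ g : G, inBall (S : Set G) (2 * E) g → π g ∈ Ftilde →
      inBall (S : Set G) E g := by
    intro g hg hπg
    obtain ⟨k, hk, hkq⟩ := inBall_lift π (S : Set G) E (π g) (hFt _ hπg)
    have := hinj g k hg (inBall_mono hE2 hk) hkq.symm
    rwa [this]
  let F : Subgroup G :=
    { carrier := {g : G | inBall (S : Set G) E g ∧ π g ∈ Ftilde}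
      one_mem' := ⟨inBall_one _ _, by rw [map_one]; exact one_mem Ftilde⟩
      mul_mem' := by
        rintro a b ⟨ha, hπa⟩ ⟨hb, hπb⟩
        have hπ : π (a * b) ∈ Ftilde := by
          rw [map_mul]; exact mul_mem hπa hπb
        have : inBall (S : Set G) (2 * E) (a * b) := by
          have := inBall_mul ha hb
          rwa [show E + E = 2 * E by omega] at this
        exact ⟨key _ this hπ, hπ⟩
      inv_mem' := by
        rintro a ⟨ha, hπa⟩
        exact ⟨inBall_inv ha, by rw [map_inv]; exact inv_mem hπa⟩ }
  have hmem : ∀ g : G, g ∈ F ↔ inBall (S : Set G) E g ∧ π g ∈ Ftilde := fun g => Iff.rfl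
  refine ⟨F, ⟨?_, ?_, ?_⟩, ?_, ?_⟩
  · -- MapsTo
    rintro g ⟨-, hg⟩
    exact hg
  · -- InjOn
    rintro a ⟨ha, -⟩ b ⟨hb, -⟩ hab
    exact hinj a b (inBall_mono hE2 ha) (inBall_mono hE2 hb) hab
  · -- SurjOn
    intro q hq
    obtain ⟨g, hg, hgq⟩ := inBall_lift π (S : Set G) E q (hFt q hq)
    exact ⟨g, ⟨hg, by rwa [hgq]⟩, hgq⟩
  · -- cardinality bound
    set T : Finset G := S ∪ S.image (fun x => x⁻¹) ∪ {1} with hT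
    have hsub : (F : Set G) ⊆ (↑(T ^ E) : Set G) := by
      rintro g ⟨hg, -⟩
      exact inBall_mem_pow S E g hg
    have h1 : Nat.card F ≤ Nat.card (↑(T ^ E) : Set G) :=
      Nat.card_mono (Finset.finite_toSet _) hsub
    have h2 : Nat.card (↑(T ^ E) : Set G) = (T ^ E).card := Nat.card_eq_finsetCard _
    have h3 : (T ^ E).card ≤ T.card ^ E := Finset.card_pow_le
    have h4 : T.card ≤ 2 * S.card + 1 := by
      calc T.card ≤ (S ∪ S.image (fun x => x⁻¹)).card + ({1} : Finset G).card :=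
            Finset.card_union_le _ _
        _ ≤ S.card + (S.image (fun x => x⁻¹)).card + 1 := by
            have := Finset.card_union_le S (S.image (fun x => x⁻¹))
            simpa using this
        _ ≤ S.card + S.card + 1 := by
            have := Finset.card_image_le (s := S) (f := fun x : G => x⁻¹)
            omega
        _ = 2 * S.card + 1 := by ring
    calc Nat.card F ≤ T.card ^ E := le_trans (h1.trans_eq h2) h3
      _ ≤ (2 * S.card + 1) ^ E := Nat.pow_le_pow_left h4 E
      _ ≤ (2 * S.card + 1) ^ (2 * E + 1) := Nat.pow_le_pow_right (by omega) (by omega)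
  · -- Finite Ftilde
    have hFfin : (F : Set G).Finite := by
      have : (F : Set G) ⊆ (↑((S ∪ S.image (fun x => x⁻¹) ∪ {1}) ^ E) : Set G) := by
        rintro g ⟨hg, -⟩
        exact inBall_mem_pow S E g hg
      exact Set.Finite.subset (Finset.finite_toSet _) this
    have himg : (Ftilde : Set Q) = π '' (F : Set G) := by
      apply Set.eq_of_subset_of_subset
      · intro q hq
        obtain ⟨g, hg, hgq⟩ := inBall_lift π (S : Set G) E q (hFt q hq)
        exact ⟨g, ⟨hg, by rwa [hgq]⟩, hgq⟩
      · rintro q ⟨g, ⟨-, hg⟩, rfl⟩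
        exact hg
    have : (Ftilde : Set Q).Finite := himg ▸ hFfin.image π
    exact this.to_subtype
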